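/- Fix s ∈ ℝ. A bounded subset Q of the Sobolev space H^s(ℝ) is equicontinuous in H^s (i.e. sup_{f∈Q} sup_{|y|<δ} ‖f(·+y) − f‖_{H^s} → 0 as δ → 0) if and only if lim_{κ→∞} sup_{f∈Q} ∫_{|ξ|≥κ} (1+|ξ|)^{2s} |f̂(ξ)|² dξ = 0. -/

import Mathlib

open MeasureTheory Complex Filter Topology Set ENNReal

noncomputable section

/-!  Elements of the Sobolev space `Hˢ(ℝ)` (for arbitrary `s ∈ ℝ`) are represented by their
Fourier transforms `w = f̂` (with the convention `f̂(ξ) = (2π)^{-1/2} ∫ e^{-iξx} f(x) dx`), via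
Plancherel's theorem.  Under this identification the squared `Hˢ` norm of `f` is
`∫ (1+|ξ|)^{2s} |w(ξ)|² dξ` and the translate `f(·+y)` corresponds to `e^{iyξ} w(ξ)`, so that
`‖f(·+y) − f‖²_{Hˢ} = ∫ (1+|ξ|)^{2s} |(e^{iyξ}−1) w(ξ)|² dξ`. -/

/-- The squared `Hˢ` norm, on the Fourier side. -/
def HsNormSqW (s : ℝ) (w : ℝ → ℂ) : ℝ≥0∞ :=
  ∫⁻ ξ : ℝ, ENNReal.ofReal ((1 + |ξ|) ^ (2 * s)) * (‖w ξ‖₊ : ℝ≥0∞) ^ 2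

lemma esq (y ξ : ℝ) :
    ((‖Complex.exp (Complex.I * y * ξ) - 1‖₊ : ℝ≥0∞)) ^ 2
      = ENNReal.ofReal (2 - 2 * Real.cos (y * ξ)) := by
  have h1 : Complex.I * (y:ℂ) * (ξ:ℂ) = ((y*ξ : ℝ) : ℂ) * Complex.I := by push_cast; ring
  rw [h1, Complex.exp_mul_I]
  set θ := y * ξ
  have hz : Complex.cos (θ:ℂ) + Complex.sin (θ:ℂ) * Complex.I - 1
      = Complex.mk (Real.cos θ - 1) (Real.sin θ) := by
    apply Complex.ext <;>
      simp [Complex.cos_ofReal_re, Complex.sin_ofReal_re, Complex.cos_ofReal_im,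
        Complex.sin_ofReal_im]
  rw [hz]
  rw [← ENNReal.ofReal_coe_nnreal, coe_nnnorm, ← ENNReal.ofReal_pow (norm_nonneg _)]
  congr 1
  rw [Complex.sq_norm, Complex.normSq_mk]
  nlinarith [Real.sin_sq_add_cos_sq θ]

lemma avg_lb {d ξ : ℝ} (hd : 0 < d) (hξ : 2/d ≤ |ξ|) :
    ENNReal.ofReal d ≤ ∫⁻ y in Set.Ioc 0 d, ENNReal.ofReal (2 - 2*Real.cos (y*ξ)) := by
  have hξpos : 0 < |ξ| := lt_of_lt_of_le (div_pos two_pos hd) hξ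
  have hξ0 : ξ ≠ 0 := abs_pos.mp hξpos
  have hcont : Continuous fun y : ℝ => 2 - 2*Real.cos (y*ξ) := by continuity
  have hint : IntegrableOn (fun y : ℝ => 2 - 2*Real.cos (y*ξ)) (Set.Ioc 0 d) volume :=
    (hcont.integrableOn_Icc).mono_set Set.Ioc_subset_Icc_self
  have hnn : 0 ≤ᵐ[volume.restrict (Set.Ioc 0 d)] fun y : ℝ => 2 - 2*Real.cos (y*ξ) := by
    filter_upwards with y
    simp only [Pi.zero_apply]
    nlinarith [Real.cos_le_one (y*ξ)]
  rw [← ofReal_integral_eq_lintegral_ofReal hint hnn]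
  apply ENNReal.ofReal_le_ofReal
  have h2 : ∫ y in (0:ℝ)..d, Real.cos (y*ξ) = Real.sin (d*ξ)/ξ := by
    rw [intervalIntegral.integral_comp_mul_right Real.cos hξ0]
    simp [integral_cos, div_eq_inv_mul]
  have hcalc : ∫ y in Set.Ioc 0 d, (2 - 2*Real.cos (y*ξ)) ∂volume
      = 2*d - 2*(Real.sin (d*ξ)/ξ) := by
    rw [← intervalIntegral.integral_of_le hd.le]
    rw [intervalIntegral.integral_sub intervalIntegrable_const
      (by apply Continuous.intervalIntegrable; continuity)]
    rw [intervalIntegral.integral_const_mul, h2]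
    simp [intervalIntegral.integral_const]
    ring
  rw [hcalc]
  have hs : Real.sin (d*ξ)/ξ ≤ 1/|ξ| := calc
    Real.sin (d*ξ)/ξ ≤ |Real.sin (d*ξ)/ξ| := le_abs_self _
    _ = |Real.sin (d*ξ)|/|ξ| := abs_div _ _
    _ ≤ 1/|ξ| := by gcongr; exact Real.abs_sin_le_one _
  have h1ξ : 1/|ξ| ≤ d/2 := by
    rw [div_le_div_iff₀ hξpos two_pos]
    have := (div_le_iff₀ hd).mp hξ
    nlinarith
  nlinarith [hs, h1ξ]

lemma expandHs (s y : ℝ) (w : ℝ → ℂ) :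
    HsNormSqW s (fun ξ => (Complex.exp (Complex.I * y * ξ) - 1) * w ξ)
      = ∫⁻ ξ : ℝ, ENNReal.ofReal (2 - 2*Real.cos (y*ξ)) *
          (ENNReal.ofReal ((1 + |ξ|) ^ (2*s)) * (‖w ξ‖₊ : ℝ≥0∞)^2) := by
  unfold HsNormSqW
  congr 1; funext ξ
  rw [nnnorm_mul, ENNReal.coe_mul, mul_pow, esq]
  ring

set_option maxHeartbeats 1000000 in
/-- A bounded subset `Q` of `Hˢ(ℝ)` is equicontinuous in `Hˢ` (i.e.
`sup_{f∈Q} sup_{|y|<δ} ‖f(·+y) − f‖_{Hˢ} → 0` as `δ → 0`) if and only if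
`lim_{κ→∞} sup_{f∈Q} ∫_{|ξ|≥κ} (1+|ξ|)^{2s} |f̂(ξ)|² dξ = 0`. -/
theorem statement_0 (s : ℝ) (Q : Set (ℝ → ℂ))
    (hmeas : ∀ w ∈ Q, AEStronglyMeasurable w (volume : Measure ℝ))
    (hbdd : ∃ C : ℝ, ∀ w ∈ Q, HsNormSqW s w ≤ ENNReal.ofReal C) :
    (∀ ε > (0 : ℝ), ∃ δ > (0 : ℝ), ∀ w ∈ Q, ∀ y : ℝ, |y| < δ →
        HsNormSqW s (fun ξ => (Complex.exp (Complex.I * y * ξ) - 1) * w ξ) ≤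
          ENNReal.ofReal (ε ^ 2))
      ↔ Tendsto (fun κ : ℝ => ⨆ w ∈ Q, ∫⁻ ξ in {ξ : ℝ | κ ≤ |ξ|},
          ENNReal.ofReal ((1 + |ξ|) ^ (2 * s)) * (‖w ξ‖₊ : ℝ≥0∞) ^ 2)
          atTop (𝓝 0) := by
  obtain ⟨C, hC⟩ := hbdd
  have hWmeas : Measurable fun ξ : ℝ => ENNReal.ofReal ((1 + |ξ|) ^ (2 * s)) := by
    apply Measurable.ennreal_ofReal
    apply Continuous.measurable
    apply Continuous.rpow_const (by continuity)
    intro x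
    left
    positivity
  constructor
  · -- equicontinuity ⇒ uniform tail decay
    intro h
    rw [ENNReal.tendsto_atTop_zero]
    intro ε hε
    obtain ⟨r, hr0, hrε⟩ : ∃ r : ℝ, 0 < r ∧ ENNReal.ofReal r ≤ ε := by
      rcases eq_or_ne ε ⊤ with hT | hT
      · exact ⟨1, one_pos, by simp [hT]⟩
      · exact ⟨ε.toReal, ENNReal.toReal_pos hε.ne' hT, by rw [ENNReal.ofReal_toReal hT]⟩
    obtain ⟨δ, hδ, hQ⟩ := h (Real.sqrt r) (Real.sqrt_pos.mpr hr0)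
    set d := δ/2 with hdd
    have hd : (0:ℝ) < d := by positivity
    refine ⟨2/d, fun κ hκ => le_trans (iSup₂_le fun w hw => ?_) hrε⟩
    set T : Set ℝ := {ξ : ℝ | κ ≤ |ξ|} with hTdef
    have hTm : MeasurableSet T := measurableSet_le measurable_const continuous_abs.measurable
    set WN : ℝ → ℝ≥0∞ :=
      fun ξ => ENNReal.ofReal ((1 + |ξ|) ^ (2 * s)) * (‖w ξ‖₊ : ℝ≥0∞) ^ 2 with hWN
    have hWNne : ∀ ξ, WN ξ ≠ ⊤ := fun ξ =>
      ENNReal.mul_ne_top ENNReal.ofReal_ne_top (ENNReal.pow_ne_top ENNReal.coe_ne_top)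
    have hWNae : AEMeasurable WN (volume.restrict T) :=
      (hWmeas.aemeasurable).mul (((hmeas w hw).restrict).enorm.pow_const 2)
    have hswap :
        ∫⁻ ξ in T, ∫⁻ y in Set.Ioc 0 d,
            ENNReal.ofReal (2 - 2*Real.cos (y*ξ)) * WN ξ
          = ∫⁻ y in Set.Ioc 0 d, ∫⁻ ξ in T,
            ENNReal.ofReal (2 - 2*Real.cos (y*ξ)) * WN ξ := by
      apply lintegral_lintegral_swap
      apply AEMeasurable.mul (f := fun p : ℝ × ℝ => ENNReal.ofReal (2 - 2*Real.cos (p.2*p.1)))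
        (g := WN ∘ Prod.fst)
      · apply Measurable.aemeasurable
        apply Measurable.ennreal_ofReal
        apply Continuous.measurable
        exact continuous_const.sub (continuous_const.mul
          (Real.continuous_cos.comp (continuous_snd.mul continuous_fst)))
      · exact hWNae.comp_quasiMeasurePreserving
          MeasureTheory.Measure.quasiMeasurePreserving_fst
    have key : ENNReal.ofReal d * ∫⁻ ξ in T, WN ξ
        ≤ ENNReal.ofReal d * ENNReal.ofReal r := by
      calc ENNReal.ofReal d * ∫⁻ ξ in T, WN ξ
          = ∫⁻ ξ in T, ENNReal.ofReal d * WN ξ :=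
            (lintegral_const_mul' _ _ ENNReal.ofReal_ne_top).symm
        _ ≤ ∫⁻ ξ in T, ∫⁻ y in Set.Ioc 0 d,
              ENNReal.ofReal (2 - 2*Real.cos (y*ξ)) * WN ξ := by
            apply setLIntegral_mono' hTm
            intro ξ hξ
            rw [lintegral_mul_const' (WN ξ) _ (hWNne ξ)]
            exact mul_le_mul_left (avg_lb hd (le_trans hκ hξ)) _
        _ = ∫⁻ y in Set.Ioc 0 d, ∫⁻ ξ in T,
              ENNReal.ofReal (2 - 2*Real.cos (y*ξ)) * WN ξ := hswap
        _ ≤ ∫⁻ _y in Set.Ioc 0 d, ENNReal.ofReal r := by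
            apply setLIntegral_mono' measurableSet_Ioc
            intro y hy
            have hyδ : |y| < δ := by
              rw [abs_of_pos hy.1]
              have := hy.2
              simp only [hdd] at this ⊢
              linarith
            calc ∫⁻ ξ in T, ENNReal.ofReal (2 - 2*Real.cos (y*ξ)) * WN ξ
                ≤ ∫⁻ ξ, ENNReal.ofReal (2 - 2*Real.cos (y*ξ)) * WN ξ :=
                  setLIntegral_le_lintegral _ _
              _ = HsNormSqW s (fun ξ => (Complex.exp (Complex.I * y * ξ) - 1) * w ξ) :=
                  (expandHs s y w).symm
              _ ≤ ENNReal.ofReal (Real.sqrt r ^ 2) := hQ w hw y hyδ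
              _ = ENNReal.ofReal r := by rw [Real.sq_sqrt hr0.le]
        _ = ENNReal.ofReal d * ENNReal.ofReal r := by
            rw [setLIntegral_const, Real.volume_Ioc, sub_zero, mul_comm]
    exact (ENNReal.mul_le_mul_iff_right (ENNReal.ofReal_pos.mpr hd).ne' ENNReal.ofReal_ne_top).mp key
  · -- uniform tail decay ⇒ equicontinuity
    intro h ε hε
    set C' : ℝ := max C 1 with hC'def
    have hC'1 : (1:ℝ) ≤ C' := le_max_right _ _
    have hC'pos : (0:ℝ) < C' := lt_of_lt_of_le one_pos hC'1
    obtain ⟨κ₀, hκ₀⟩ := ENNReal.tendsto_atTop_zero.mp h (ENNReal.ofReal (ε^2/8))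
      (ENNReal.ofReal_pos.mpr (by positivity))
    set κ : ℝ := max κ₀ 1 with hκdef
    have hκpos : (0:ℝ) < κ := lt_of_lt_of_le one_pos (le_max_right _ _)
    set T : Set ℝ := {ξ : ℝ | κ ≤ |ξ|} with hTdef
    have hTm : MeasurableSet T := measurableSet_le measurable_const continuous_abs.measurable
    have htail : ∀ w ∈ Q, (∫⁻ ξ in T,
        ENNReal.ofReal ((1 + |ξ|) ^ (2 * s)) * (‖w ξ‖₊ : ℝ≥0∞) ^ 2)
          ≤ ENNReal.ofReal (ε^2/8) := by
      intro w hw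
      refine le_trans ?_ (hκ₀ κ (le_max_left _ _))
      exact le_iSup₂_of_le w hw le_rfl
    have hsq2C : (0:ℝ) < Real.sqrt (2*C') := Real.sqrt_pos.mpr (by linarith)
    set δ : ℝ := ε / (κ * Real.sqrt (2*C')) with hδdef
    have hδpos : (0:ℝ) < δ := div_pos hε (mul_pos hκpos hsq2C)
    refine ⟨δ, hδpos, fun w hw y hy => ?_⟩
    rw [expandHs s y w]
    set WN : ℝ → ℝ≥0∞ :=
      fun ξ => ENNReal.ofReal ((1 + |ξ|) ^ (2 * s)) * (‖w ξ‖₊ : ℝ≥0∞) ^ 2 with hWN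
    rw [← lintegral_add_compl
      (fun ξ => ENNReal.ofReal (2 - 2*Real.cos (y*ξ)) * WN ξ) hTm]
    have hpart1 : ∫⁻ ξ in T, ENNReal.ofReal (2 - 2*Real.cos (y*ξ)) * WN ξ
        ≤ ENNReal.ofReal (ε^2/2) := by
      calc ∫⁻ ξ in T, ENNReal.ofReal (2 - 2*Real.cos (y*ξ)) * WN ξ
          ≤ ∫⁻ ξ in T, 4 * WN ξ := by
            apply setLIntegral_mono' hTm
            intro ξ _
            refine mul_le_mul_left ?_ _
            calc ENNReal.ofReal (2 - 2*Real.cos (y*ξ)) ≤ ENNReal.ofReal 4 :=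
                ENNReal.ofReal_le_ofReal (by nlinarith [Real.neg_one_le_cos (y*ξ)])
              _ = 4 := by norm_num
        _ = 4 * ∫⁻ ξ in T, WN ξ := lintegral_const_mul' _ _ (by norm_num)
        _ ≤ 4 * ENNReal.ofReal (ε^2/8) := mul_le_mul_right (htail w hw) _
        _ = ENNReal.ofReal (ε^2/2) := by
            rw [show (4:ℝ≥0∞) = ENNReal.ofReal 4 by norm_num,
              ← ENNReal.ofReal_mul (by norm_num)]
            ring_nf
    have hpart2 : ∫⁻ ξ in Tᶜ, ENNReal.ofReal (2 - 2*Real.cos (y*ξ)) * WN ξ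
        ≤ ENNReal.ofReal (ε^2/2) := by
      have hδκ : δ * κ = ε / Real.sqrt (2*C') := by
        rw [hδdef]; field_simp
      calc ∫⁻ ξ in Tᶜ, ENNReal.ofReal (2 - 2*Real.cos (y*ξ)) * WN ξ
          ≤ ∫⁻ ξ in Tᶜ, ENNReal.ofReal ((δ*κ)^2) * WN ξ := by
            apply setLIntegral_mono' hTm.compl
            intro ξ hξ
            refine mul_le_mul_left (ENNReal.ofReal_le_ofReal ?_) _
            have hξκ : |ξ| < κ := by
              simpa [hTdef, Set.mem_compl_iff, Set.mem_setOf_eq, not_le] using hξ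
            have h1 : 2 - 2*Real.cos (y*ξ) ≤ (y*ξ)^2 := by
              nlinarith [Real.one_sub_sq_div_two_le_cos (x := y*ξ)]
            have habs : |y*ξ| ≤ δ*κ := by
              rw [abs_mul]
              exact mul_le_mul hy.le hξκ.le (abs_nonneg _) hδpos.le
            have h2 : (y*ξ)^2 ≤ (δ*κ)^2 := by
              rw [← _root_.sq_abs (y*ξ)]
              nlinarith [abs_nonneg (y*ξ)]
            linarith
        _ = ENNReal.ofReal ((δ*κ)^2) * ∫⁻ ξ in Tᶜ, WN ξ :=
            lintegral_const_mul' _ _ ENNReal.ofReal_ne_top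
        _ ≤ ENNReal.ofReal ((δ*κ)^2) * ENNReal.ofReal C' := by
            refine mul_le_mul_right ?_ _
            refine le_trans (setLIntegral_le_lintegral _ _) ?_
            exact le_trans (hC w hw) (ENNReal.ofReal_le_ofReal (le_max_left _ _))
        _ = ENNReal.ofReal ((δ*κ)^2 * C') := (ENNReal.ofReal_mul (by positivity)).symm
        _ ≤ ENNReal.ofReal (ε^2/2) := by
            apply ENNReal.ofReal_le_ofReal
            rw [hδκ, div_pow, Real.sq_sqrt (by positivity : (0:ℝ) ≤ 2*C')]
            rw [div_mul_eq_mul_div, mul_comm (2:ℝ) C', ← div_div, mul_div_assoc]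
            rw [div_self hC'pos.ne']
            simp
    calc (∫⁻ ξ in T, ENNReal.ofReal (2 - 2*Real.cos (y*ξ)) * WN ξ)
          + ∫⁻ ξ in Tᶜ, ENNReal.ofReal (2 - 2*Real.cos (y*ξ)) * WN ξ
        ≤ ENNReal.ofReal (ε^2/2) + ENNReal.ofReal (ε^2/2) := add_le_add hpart1 hpart2
      _ = ENNReal.ofReal (ε^2) := by
          rw [← ENNReal.ofReal_add (by positivity) (by positivity)]
          ring_nf

end
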